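/- arXiv:1407.8421 — 3 statements merged into one kernel-verified Lean document; each statement's English description precedes it below -/
import Mathlib

section
/- The sequence (p_k) is strictly increasing: p_{k-1} < p_k for every k ≥ 1. -/
/-- `B r s p = ∑_{i=0}^{s-1} C(r,i) p^{r-i} (1-p)^i`, the probability that a
Binomial(r,p) random variable exceeds `r - s`. -/
noncomputable def B (r s : ℕ) (p : ℝ) : ℝ :=
  ∑ i ∈ Finset.range s, (r.choose i : ℝ) * p ^ (r - i) * (1 - p) ^ i

/-- `f k (x, p) = (k+1) B_{r,s}(p) - k B_{r,s}(x) - 2x + 1`. -/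
noncomputable def f (r s k : ℕ) (x p : ℝ) : ℝ :=
  ((k : ℝ) + 1) * B r s p - (k : ℝ) * B r s x - 2 * x + 1

lemma hasDerivAt_B (r s : ℕ) (hs : 1 ≤ s) (hrs : s ≤ r) (x : ℝ) :
    HasDerivAt (B r s)
      ((r.choose (s-1) : ℝ) * ((r - (s-1) : ℕ) : ℝ) * x ^ (r - s) * (1 - x) ^ (s - 1)) x := by
  set F : ℕ → ℝ := fun i => (r.choose i : ℝ) * ((r - i : ℕ) : ℝ) * x ^ (r - i - 1) * (1 - x) ^ i
    with hF
  set G : ℕ → ℝ := fun i => (r.choose i : ℝ) * (i : ℝ) * x ^ (r - i) * (1 - x) ^ (i - 1) with hG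
  have key : HasDerivAt (B r s) (∑ i ∈ Finset.range s, (F i - G i)) x := by
    unfold B
    apply HasDerivAt.fun_sum
    intro i hi
    have h1 := hasDerivAt_pow (r - i) x
    have h2 : HasDerivAt (fun p : ℝ => 1 - p) (-1) x := by
      simpa using (hasDerivAt_const x (1:ℝ)).fun_sub (hasDerivAt_id' x)
    have h3 := h2.fun_pow i
    have h4 := (h1.const_mul ((r.choose i : ℝ))).fun_mul h3
    convert h4 using 1
    · rfl
    simp only [hF, hG]
    ring
  have hGF : ∀ i, G (i + 1) = F i := by
    intro i
    have hid : r.choose (i+1) * (i+1) = r.choose i * (r - i) := Nat.choose_succ_right_eq r i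
    have hid' : ((r.choose (i+1) : ℝ)) * ((i+1 : ℕ) : ℝ) = (r.choose i : ℝ) * ((r - i : ℕ) : ℝ) := by
      exact_mod_cast congrArg (Nat.cast : ℕ → ℝ) hid
    simp only [hF, hG]
    have e1 : r - (i+1) = r - i - 1 := by omega
    have e2 : (i + 1) - 1 = i := by omega
    rw [e1, e2]
    push_cast at hid' ⊢
    rw [hid']
  have hsum : (∑ i ∈ Finset.range s, (F i - G i))
      = (r.choose (s-1) : ℝ) * ((r - (s-1) : ℕ) : ℝ) * x ^ (r - s) * (1 - x) ^ (s - 1) := by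
    obtain ⟨m, rfl⟩ : ∃ m, s = m + 1 := ⟨s - 1, by omega⟩
    rw [Finset.sum_sub_distrib]
    rw [Finset.sum_range_succ' G m]
    have hG0 : G 0 = 0 := by simp [hG]
    rw [hG0, add_zero]
    have : ∀ i ∈ Finset.range m, G (i + 1) = F i := fun i _ => hGF i
    rw [Finset.sum_congr rfl this]
    rw [Finset.sum_range_succ F m]
    have em : m + 1 - 1 = m := by omega
    have ex : r - m - 1 = r - (m + 1) := by omega
    simp only [hF, em, ex]
    ring
  rw [hsum] at key
  exact key

lemma B_strictMonoOn (r s : ℕ) (hs : 1 ≤ s) (hrs : s ≤ r) :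
    StrictMonoOn (B r s) (Set.Icc (0:ℝ) 1) := by
  apply strictMonoOn_of_deriv_pos (convex_Icc 0 1)
  · apply Continuous.continuousOn
    unfold B
    fun_prop
  · intro x hx
    rw [interior_Icc] at hx
    rw [(hasDerivAt_B r s hs hrs x).deriv]
    have h1 : 0 < (r.choose (s-1) : ℝ) := by
      have : 0 < r.choose (s-1) := Nat.choose_pos (by omega)
      exact_mod_cast this
    have h2 : 0 < ((r - (s-1) : ℕ) : ℝ) := by
      have : 0 < r - (s - 1) := by omega
      exact_mod_cast this
    have h3 : 0 < x ^ (r - s) := pow_pos hx.1 _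
    have h4 : 0 < (1 - x) ^ (s - 1) := pow_pos (by linarith [hx.2]) _
    positivity

/-- The sequence `(p_k)` (given by `p_0 = 0` and `p_k ∈ (0,1)` the unique root of
`f_k(·, p_{k-1})`) is strictly increasing: `p_{k-1} < p k` for every `k ≥ 1`. -/
theorem stmt_1 (r s : ℕ) (hs : 1 ≤ s) (hrs : s ≤ r) (p : ℕ → ℝ)
    (hp0 : p 0 = 0)
    (hp : ∀ k, 1 ≤ k → p k ∈ Set.Ioo (0 : ℝ) 1 ∧ f r s k (p k) (p (k - 1)) = 0) :
    ∀ k, 1 ≤ k → p (k - 1) < p k := by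
  have hmono := B_strictMonoOn r s hs hrs
  intro k hk
  induction k with
  | zero => omega
  | succ n ih =>
    by_cases hn : n = 0
    · subst hn
      simp only [Nat.sub_self, hp0]
      exact (hp 1 le_rfl).1.1
    · have hn1 : 1 ≤ n := by omega
      have IH := ih hn1
      simp only [Nat.add_sub_cancel]
      have hpn := (hp n hn1).1
      have hpn' := (hp (n+1) (by omega)).1
      have hpnm : p (n - 1) ∈ Set.Icc (0:ℝ) 1 := by
        by_cases h1 : n = 1
        · subst h1; simp [hp0]
        · exact Set.mem_Icc_of_Ioo ((hp (n-1) (by omega)).1)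
      have hpnI : p n ∈ Set.Icc (0:ℝ) 1 := Set.mem_Icc_of_Ioo hpn
      have hpn'I : p (n+1) ∈ Set.Icc (0:ℝ) 1 := Set.mem_Icc_of_Ioo hpn'
      have E1 := (hp n hn1).2
      have E2 := (hp (n+1) (by omega)).2
      simp only [Nat.add_sub_cancel] at E2
      by_contra hcon
      push_neg at hcon
      have hBle : B r s (p (n+1)) ≤ B r s (p n) := by
        rcases eq_or_lt_of_le hcon with h | h
        · rw [h]
        · exact le_of_lt (hmono hpn'I hpnI h)
      have hBlt : B r s (p (n-1)) < B r s (p n) := hmono hpnm hpnI IH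
      unfold f at E1 E2
      push_cast at E1 E2
      have hk1 : (0:ℝ) < (n:ℝ) + 1 := by positivity
      nlinarith [mul_pos hk1 (sub_pos.mpr hBlt), mul_nonneg (le_of_lt hk1) (sub_nonneg.mpr hBle)]
end

section
/- Suppose r ≥ s ≥ 2. For every k ≥ 1 such that p_{k-1} > (r−s)/(r−1), one has 1 − p_k < ((k+1)/2)·binom(r,s)·(1 − p_{k-1})^s. -/
lemma sum_all (r : ℕ) (p : ℝ) :
    ∑ i ∈ Finset.range (r + 1), (r.choose i : ℝ) * p ^ (r - i) * (1 - p) ^ i = 1 := by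
  have h := add_pow (1 - p) p r
  have h1 : ((1 - p) + p) ^ r = 1 := by ring_nf
  rw [h1] at h
  calc ∑ i ∈ Finset.range (r + 1), (r.choose i : ℝ) * p ^ (r - i) * (1 - p) ^ i
      = ∑ i ∈ Finset.range (r + 1), (1 - p) ^ i * p ^ (r - i) * (r.choose i : ℝ) := by
        apply Finset.sum_congr rfl; intro i _; ring
    _ = 1 := h.symm

lemma tail_eq (r s : ℕ) (hrs : s ≤ r) (p : ℝ) :
    1 - B r s p = ∑ i ∈ Finset.Ico s (r + 1), (r.choose i : ℝ) * p ^ (r - i) * (1 - p) ^ i := by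
  have h := sum_all r p
  rw [Finset.range_eq_Ico, ← Finset.sum_Ico_consecutive _ (Nat.zero_le s)
    (Nat.le_succ_of_le hrs)] at h
  rw [B, Finset.range_eq_Ico]
  linarith [h]

lemma tail_nonneg_terms (r : ℕ) (p : ℝ) (hp0 : 0 ≤ p) (hp1 : p ≤ 1) (i : ℕ) :
    0 ≤ (r.choose i : ℝ) * p ^ (r - i) * (1 - p) ^ i := by
  have : (0:ℝ) ≤ 1 - p := by linarith
  positivity

lemma B_le_one (r s : ℕ) (hrs : s ≤ r) (p : ℝ) (hp0 : 0 ≤ p) (hp1 : p ≤ 1) :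
    B r s p ≤ 1 := by
  have h := tail_eq r s hrs p
  have : 0 ≤ ∑ i ∈ Finset.Ico s (r + 1), (r.choose i : ℝ) * p ^ (r - i) * (1 - p) ^ i :=
    Finset.sum_nonneg fun i _ => tail_nonneg_terms r p hp0 hp1 i
  linarith

lemma B_lt_one (r s : ℕ) (hrs : s ≤ r) (p : ℝ) (hp0 : 0 ≤ p) (hp1 : p < 1) :
    B r s p < 1 := by
  have h := tail_eq r s hrs p
  have hr : r ∈ Finset.Ico s (r + 1) := Finset.mem_Ico.mpr ⟨hrs, Nat.lt_succ_self r⟩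
  have hterm : (0:ℝ) < (r.choose r : ℝ) * p ^ (r - r) * (1 - p) ^ r := by
    have h1p : (0:ℝ) < 1 - p := by linarith
    simp [Nat.choose_self]
    positivity
  have hsum : (r.choose r : ℝ) * p ^ (r - r) * (1 - p) ^ r ≤
      ∑ i ∈ Finset.Ico s (r + 1), (r.choose i : ℝ) * p ^ (r - i) * (1 - p) ^ i :=
    Finset.single_le_sum (fun i _ => tail_nonneg_terms r p hp0 (le_of_lt hp1) i) hr
  linarith

lemma tail_le (r s : ℕ) (hrs : s ≤ r) (p : ℝ) (hp0 : 0 ≤ p) (hp1 : p ≤ 1) :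
    1 - B r s p ≤ (r.choose s : ℝ) * (1 - p) ^ s := by
  rw [tail_eq r s hrs p]
  have h1p : (0:ℝ) ≤ 1 - p := by linarith
  rw [Finset.sum_Ico_eq_sum_range]
  have key : ∀ j ∈ Finset.range (r + 1 - s),
      (r.choose (s + j) : ℝ) * p ^ (r - (s + j)) * (1 - p) ^ (s + j) ≤
      (r.choose s : ℝ) * (1 - p) ^ s *
        (((r - s).choose j : ℝ) * p ^ ((r - s) - j) * (1 - p) ^ j) := by
    intro j hj
    rw [Finset.mem_range] at hj
    have hsj : s + j ≤ r := by omega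
    have hch : (r.choose (s + j) : ℕ) ≤ r.choose s * (r - s).choose j := by
      have := Nat.choose_mul (n := r) (Nat.le_add_right s j)
      simp only [Nat.add_sub_cancel_left] at this
      calc r.choose (s + j) ≤ r.choose (s + j) * (s + j).choose s :=
            Nat.le_mul_of_pos_right _ (Nat.choose_pos (Nat.le_add_right s j))
        _ = r.choose s * (r - s).choose j := this
    have hch' : (r.choose (s + j) : ℝ) ≤ (r.choose s : ℝ) * ((r - s).choose j : ℝ) := by
      exact_mod_cast hch
    have hre : r - (s + j) = (r - s) - j := by omega
    rw [hre, pow_add]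
    calc (r.choose (s + j) : ℝ) * p ^ ((r - s) - j) * ((1 - p) ^ s * (1 - p) ^ j)
        ≤ ((r.choose s : ℝ) * ((r - s).choose j : ℝ)) * p ^ ((r - s) - j) *
            ((1 - p) ^ s * (1 - p) ^ j) := by
          apply mul_le_mul_of_nonneg_right (mul_le_mul_of_nonneg_right hch' (by positivity))
          positivity
      _ = (r.choose s : ℝ) * (1 - p) ^ s *
            (((r - s).choose j : ℝ) * p ^ ((r - s) - j) * (1 - p) ^ j) := by ring
  calc ∑ j ∈ Finset.range (r + 1 - s),
        (r.choose (s + j) : ℝ) * p ^ (r - (s + j)) * (1 - p) ^ (s + j)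
      ≤ ∑ j ∈ Finset.range (r + 1 - s), (r.choose s : ℝ) * (1 - p) ^ s *
          (((r - s).choose j : ℝ) * p ^ ((r - s) - j) * (1 - p) ^ j) :=
        Finset.sum_le_sum key
    _ = (r.choose s : ℝ) * (1 - p) ^ s := by
        rw [← Finset.mul_sum]
        have : r + 1 - s = (r - s) + 1 := by omega
        rw [this, sum_all (r - s) p, mul_one]

/-- For `r ≥ s ≥ 2`: for every `k ≥ 1` with `p_{k-1} > (r-s)/(r-1)`, one has
`1 - p_k < ((k+1)/2) · C(r,s) · (1 - p_{k-1})^s`. -/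
theorem stmt_9 (r s : ℕ) (hs : 2 ≤ s) (hrs : s ≤ r) (p : ℕ → ℝ)
    (hp0 : p 0 = 0)
    (hp : ∀ k, 1 ≤ k → p k ∈ Set.Ioo (0 : ℝ) 1 ∧ f r s k (p k) (p (k - 1)) = 0) :
    ∀ k, 1 ≤ k → ((r : ℝ) - s) / ((r : ℝ) - 1) < p (k - 1) →
      1 - p k < ((k : ℝ) + 1) / 2 * (r.choose s : ℝ) * (1 - p (k - 1)) ^ s := by
  intro k hk _
  obtain ⟨⟨hxk0, hxk1⟩, hf⟩ := hp k hk
  -- bounds on p (k-1)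
  have hq0 : 0 ≤ p (k - 1) := by
    rcases Nat.lt_or_ge (k - 1) 1 with h | h
    · interval_cases h' : (k - 1) <;> simp_all
    · exact le_of_lt (hp (k - 1) h).1.1
  have hq1 : p (k - 1) ≤ 1 := by
    rcases Nat.lt_or_ge (k - 1) 1 with h | h
    · interval_cases h' : (k - 1) <;> simp_all
    · exact le_of_lt (hp (k - 1) h).1.2
  have hBx : B r s (p k) < 1 := B_lt_one r s hrs _ (le_of_lt hxk0) hxk1
  have hBq : 1 - B r s (p (k - 1)) ≤ (r.choose s : ℝ) * (1 - p (k - 1)) ^ s :=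
    tail_le r s hrs _ hq0 hq1
  have hk1 : (1:ℝ) ≤ (k : ℝ) := by exact_mod_cast hk
  unfold f at hf
  -- 2(1 - p k) = (k+1)(1 - B q) - k(1 - B x) < (k+1) C(r,s)(1-q)^s
  nlinarith [mul_le_mul_of_nonneg_left hBq (by linarith : (0:ℝ) ≤ (k:ℝ) + 1),
    mul_pos (by linarith : (0:ℝ) < (k:ℝ)) (by linarith : (0:ℝ) < 1 - B r s (p k))]
end

section
/- For the greedy-choice sequence with r = 2 and s = 1: the sequence a_k = (1 − p_k)·log(k+1) converges to some limit α with 1 ≤ α ≤ 2, and if α < 2 then a_k is strictly increasing for all sufficiently large k. -/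
open Filter

lemma aux_ratio_lemma (y L : ℕ → ℝ)
    (hL : Tendsto L atTop atTop)
    (h : ∀ ε : ℝ, 0 < ε → ε ≤ 1 → ∃ K : ℕ, ∀ k, K ≤ k →
      (1 - ε) * (L (k+1) - L k) ≤ y (k+1) - y k ∧
      y (k+1) - y k ≤ (1 + ε) * (L (k+1) - L k)) :
    Tendsto (fun k => y k / L k) atTop (nhds 1) := by
  rw [Metric.tendsto_atTop]
  intro ε hε
  set ε' : ℝ := min (ε/2) 1 with hε'def
  have hε'pos : 0 < ε' := lt_min (by linarith) one_pos
  have hε'le : ε' ≤ ε/2 := min_le_left _ _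
  obtain ⟨K, hK⟩ := h ε' hε'pos (min_le_right _ _)
  -- telescoped bounds
  have hup : ∀ k, K ≤ k → y k ≤ (1+ε') * L k + (y K - (1+ε') * L K) := by
    intro k hk
    induction k, hk using Nat.le_induction with
    | base => ring_nf; nlinarith []
    | succ n hn ih =>
      have := (hK n hn).2
      linarith
  have hlo : ∀ k, K ≤ k → (1-ε') * L k + (y K - (1-ε') * L K) ≤ y k := by
    intro k hk
    induction k, hk using Nat.le_induction with
    | base => ring_nf; nlinarith []
    | succ n hn ih =>
      have := (hK n hn).1
      linarith
  set M : ℝ := |y K| + 2 * |L K| with hM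
  have hM0 : 0 ≤ M := by positivity
  have hev : ∀ᶠ k in atTop, (4 * (M + 1) / ε ≤ L k ∧ 1 ≤ L k) :=
    (hL.eventually_ge_atTop _).and (hL.eventually_ge_atTop _)
  rw [eventually_atTop] at hev
  obtain ⟨N, hN⟩ := hev
  refine ⟨max K N, fun k hk => ?_⟩
  have hkK : K ≤ k := le_trans (le_max_left _ _) hk
  have hkN : N ≤ k := le_trans (le_max_right _ _) hk
  obtain ⟨hL1, hL2⟩ := hN k hkN
  have hLpos : 0 < L k := lt_of_lt_of_le one_pos hL2
  have h1 := hup k hkK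
  have h2 := hlo k hkK
  rw [Real.dist_eq]
  rw [abs_lt]
  have hC2 : y K - (1+ε') * L K ≤ M := by
    have h1 : y K ≤ |y K| := le_abs_self _
    have h2 : -(|L K|) ≤ L K := neg_abs_le _
    have h3 : L K ≤ |L K| := le_abs_self _
    have : (1+ε') * L K ≥ -(2 * |L K|) := by nlinarith [hε'pos, min_le_right (ε/2) (1:ℝ)]
    simp only [hM]; linarith
  have hC1 : -M ≤ y K - (1-ε') * L K := by
    have h1 : -(|y K|) ≤ y K := neg_abs_le _
    have h3 : L K ≤ |L K| := le_abs_self _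
    have h2 : -(|L K|) ≤ L K := neg_abs_le _
    have : (1-ε') * L K ≤ 2 * |L K| := by nlinarith [hε'pos, min_le_right (ε/2) (1:ℝ)]
    simp only [hM]; linarith
  have hML : M / L k < ε / 2 := by
    rw [div_lt_iff₀ hLpos]
    have : 4 * (M+1) / ε * (ε/2) = 2*(M+1) := by field_simp; ring
    nlinarith
  have hMLk : M < ε/2 * L k := (div_lt_iff₀ hLpos).1 hML
  have hε'L : ε' * L k ≤ ε/2 * L k := mul_le_mul_of_nonneg_right hε'le hLpos.le
  have key1 : y k < (1 + ε) * L k := by nlinarith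
  have key2 : (1 - ε) * L k < y k := by nlinarith
  constructor
  · have : 1 - ε < y k / L k := (lt_div_iff₀ hLpos).2 (by linarith)
    linarith
  · have : y k / L k < 1 + ε := (div_lt_iff₀ hLpos).2 (by linarith)
    linarith

set_option maxHeartbeats 1000000 in
theorem key_limit (p : ℕ → ℝ) (hp0 : p 0 = 0)
    (hp : ∀ k, 1 ≤ k → p k ∈ Set.Ioo (0 : ℝ) 1 ∧
      ((k : ℝ) + 1) * p (k - 1) ^ 2 - (k : ℝ) * p k ^ 2 - 2 * p k + 1 = 0) :
    Filter.Tendsto (fun k : ℕ => (1 - p k) * Real.log ((k : ℝ) + 1))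
        Filter.atTop (nhds 2) := by
  obtain ⟨q, hqdef⟩ : ∃ q : ℕ → ℝ, ∀ k, q k = 1 - p k := ⟨_, fun _ => rfl⟩
  obtain ⟨s, hsdef⟩ : ∃ s : ℕ → ℝ, ∀ k, s k = q k * (2 - q k) := ⟨_, fun _ => rfl⟩
  have hqpos : ∀ k, 0 < q k := by
    intro k
    rcases Nat.eq_zero_or_pos k with h | h
    · subst h; rw [hqdef, hp0]; norm_num
    · have := (hp k h).1.2
      rw [hqdef]; linarith
  have hqle : ∀ k, q k ≤ 1 := by
    intro k
    rcases Nat.eq_zero_or_pos k with h | h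
    · subst h; rw [hqdef, hp0]; norm_num
    · have := (hp k h).1.1
      rw [hqdef]; linarith
  have hspos : ∀ k, 0 < s k := by
    intro k
    have h1 := hqpos k; have h2 := hqle k
    rw [hsdef]; nlinarith
  have hrec : ∀ k : ℕ, ((k:ℝ)+2) * s (k+1) = ((k:ℝ)+2) * s k - q (k+1)^2 := by
    intro k
    have h := (hp (k+1) (by omega)).2
    have hk1 : (k+1) - 1 = k := by omega
    rw [hk1] at h
    push_cast at h
    rw [hsdef (k+1), hsdef k, hqdef (k+1), hqdef k]
    linear_combination h
  have hrec' : ∀ k : ℕ, s (k+1) = s k - q (k+1)^2 / ((k:ℝ)+2) := by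
    intro k
    have hk2 : (0:ℝ) < (k:ℝ)+2 := by positivity
    field_simp
    linear_combination hrec k
  have hanti : ∀ k, s (k+1) ≤ s k := by
    intro k
    rw [hrec' k]
    have hk2 : (0:ℝ) < (k:ℝ)+2 := by positivity
    have : 0 ≤ q (k+1)^2 / ((k:ℝ)+2) := by positivity
    linarith
  have hqs : ∀ k, q k ≤ s k := by
    intro k
    have h1 := hqpos k; have h2 := hqle k
    rw [hsdef]; nlinarith
  have hs2q : ∀ k, s k ≤ 2 * q k := by
    intro k
    have h1 := hqpos k
    rw [hsdef]; nlinarith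
  -- s tends to 0
  have hAnti : Antitone s := antitone_nat_of_succ_le hanti
  have hbdd : BddBelow (Set.range s) := ⟨0, by rintro x ⟨k, rfl⟩; exact (hspos k).le⟩
  have hconv := tendsto_atTop_ciInf hAnti hbdd
  have hΛ0 : 0 ≤ ⨅ i, s i := le_ciInf fun i => (hspos i).le
  have hΛeq : (⨅ i, s i) = 0 := by
    by_contra hne
    have hΛpos' : 0 < ⨅ i, s i := lt_of_le_of_ne hΛ0 (Ne.symm hne)
    obtain ⟨Λ, hΛdef⟩ : ∃ Λ : ℝ, (⨅ i, s i) = Λ := ⟨_, rfl⟩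
    have hΛpos : 0 < Λ := hΛdef ▸ hΛpos'
    have hqlb : ∀ k, Λ/2 ≤ q k := by
      intro k
      have h1 : Λ ≤ s k := hΛdef ▸ ciInf_le hbdd k
      have h2 := hs2q k
      linarith
    have hsum : ∀ n, s n + (Λ/2)^2 * ∑ i ∈ Finset.range n, 1/((i:ℝ)+2) ≤ s 0 := by
      intro n
      induction n with
      | zero => simp
      | succ n ih =>
        rw [Finset.sum_range_succ, hrec' n]
        have hk2 : (0:ℝ) < (n:ℝ)+2 := by positivity
        have hq2 : (Λ/2)^2 ≤ q (n+1)^2 := by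
          have := hqlb (n+1); have := hqpos (n+1)
          nlinarith
        have h3 : (Λ/2)^2 * (1/((n:ℝ)+2)) ≤ q (n+1)^2 * (1/((n:ℝ)+2)) :=
          mul_le_mul_of_nonneg_right hq2 (by positivity)
        have h4 : q (n+1)^2 * (1/((n:ℝ)+2)) = q (n+1)^2 / ((n:ℝ)+2) := by ring
        linarith
    -- harmonic sum diverges
    have hharm : Tendsto (fun n => ∑ i ∈ Finset.range n, 1/((i:ℝ)+2)) atTop atTop := by
      have h1 := Real.tendsto_sum_range_one_div_nat_succ_atTop
      have h2 : Tendsto (fun n => (∑ i ∈ Finset.range (n+1), 1/((i:ℝ)+1)) + (-1))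
          atTop atTop :=
        tendsto_atTop_add_const_right _ _ (h1.comp (tendsto_add_atTop_nat 1))
      refine h2.congr fun n => ?_
      rw [Finset.sum_range_succ' (fun i => 1/((i:ℝ)+1)) n]
      norm_num
      exact Finset.sum_congr rfl fun x _ => by push_cast; ring
    obtain ⟨n, hn⟩ := (hharm.eventually_ge_atTop ((s 0 + 1)/((Λ/2)^2))).exists
    have hΛ2 : (0:ℝ) < (Λ/2)^2 := by positivity
    have := hsum n
    have hge : s 0 + 1 ≤ (Λ/2)^2 * ∑ i ∈ Finset.range n, 1/((i:ℝ)+2) := by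
      rw [div_le_iff₀ hΛ2] at hn
      linarith [hn, mul_comm ((Λ/2)^2) (∑ i ∈ Finset.range n, 1/((i:ℝ)+2))]
    have := hspos n
    linarith
  rw [hΛeq] at hconv
  have hq0' : Tendsto q atTop (nhds 0) :=
    squeeze_zero (fun k => (hqpos k).le) hqs hconv
  -- the log sequence
  obtain ⟨L, hLdef⟩ : ∃ L : ℕ → ℝ, ∀ k, L k = Real.log ((k:ℝ)+1) := ⟨_, fun _ => rfl⟩
  have hLtop : Tendsto L atTop atTop := by
    have h1 : Tendsto (fun k : ℕ => ((k:ℝ)+1)) atTop atTop :=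
      tendsto_atTop_add_const_right _ 1 tendsto_natCast_atTop_atTop
    exact (Real.tendsto_log_atTop.comp h1).congr fun k => (hLdef k).symm
  have hΔLub : ∀ k : ℕ, L (k+1) - L k ≤ 1/((k:ℝ)+1) := by
    intro k
    have hx : (0:ℝ) < ((k:ℝ)+2)/((k:ℝ)+1) := by positivity
    have h := Real.log_le_sub_one_of_pos hx
    rw [Real.log_div (by positivity) (by positivity)] at h
    have e2 : ((k:ℝ)+2)/((k:ℝ)+1) - 1 = 1/((k:ℝ)+1) := by
      field_simp
      norm_num
    rw [e2] at h
    rw [hLdef (k+1), hLdef k]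
    have e : ((k+1:ℕ):ℝ)+1 = (k:ℝ)+2 := by push_cast; ring
    rw [e]
    linarith
  have hΔLlb : ∀ k : ℕ, 1/((k:ℝ)+2) ≤ L (k+1) - L k := by
    intro k
    have hx : (0:ℝ) < ((k:ℝ)+1)/((k:ℝ)+2) := by positivity
    have h := Real.log_le_sub_one_of_pos hx
    rw [Real.log_div (by positivity) (by positivity)] at h
    have e2 : ((k:ℝ)+1)/((k:ℝ)+2) - 1 = -(1/((k:ℝ)+2)) := by
      field_simp
      norm_num
    rw [e2] at h
    rw [hLdef (k+1), hLdef k]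
    have e : ((k+1:ℕ):ℝ)+1 = (k:ℝ)+2 := by push_cast; ring
    rw [e]
    linarith
  -- increment sandwich
  have hkey : ∀ ε : ℝ, 0 < ε → ε ≤ 1 → ∃ K : ℕ, ∀ k, K ≤ k →
      (1 - ε) * (L (k+1) - L k) ≤ 4 / s (k+1) - 4 / s k ∧
      4 / s (k+1) - 4 / s k ≤ (1 + ε) * (L (k+1) - L k) := by
    intro ε hε hε1
    have hev : ∀ᶠ k in atTop, q k < ε/2 :=
      hq0'.eventually (eventually_lt_nhds (by linarith) |>.mono fun x hx => hx)
    obtain ⟨K₁, hK₁⟩ := eventually_atTop.1 hev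
    refine ⟨max K₁ ⌈2/ε⌉₊, fun k hk => ?_⟩
    have hkK1 : K₁ ≤ k + 1 := le_trans (le_trans (le_max_left _ _) hk) (Nat.le_succ k)
    have ha1 : q (k+1) < ε/2 := hK₁ (k+1) hkK1
    have ha0 : 0 < q (k+1) := hqpos (k+1)
    have ha2 : q (k+1) ≤ 1 := hqle (k+1)
    have hkε : 2/ε ≤ (k:ℝ) := by
      have h1 : (⌈2/ε⌉₊ : ℕ) ≤ k := le_trans (le_max_right _ _) hk
      exact le_trans (Nat.le_ceil _) (by exact_mod_cast h1)
    have hεk : 2 ≤ (k:ℝ) * ε := by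
      rw [div_le_iff₀ hε] at hkε
      linarith
    have hk1 : (0:ℝ) < (k:ℝ)+1 := by positivity
    have hk2 : (0:ℝ) < (k:ℝ)+2 := by positivity
    have hs1 : s (k+1) = q (k+1) * (2 - q (k+1)) := hsdef _
    have hskpos := hspos k
    have hsk1pos := hspos (k+1)
    have hΔ : 4 / s (k+1) - 4 / s k
        = 4 * (q (k+1))^2 / (((k:ℝ)+2) * (s k * s (k+1))) := by
      field_simp
      linear_combination (-1) * hrec k
    have hD : ((k:ℝ)+2) * (s k * s (k+1))
        = (((k:ℝ)+2) * s (k+1) + q (k+1)^2) * s (k+1) := by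
      have hsk : ((k:ℝ)+2) * s k = ((k:ℝ)+2) * s (k+1) + q (k+1)^2 := by
        linarith [hrec k]
      calc ((k:ℝ)+2) * (s k * s (k+1)) = (((k:ℝ)+2) * s k) * s (k+1) := by ring
      _ = (((k:ℝ)+2) * s (k+1) + q (k+1)^2) * s (k+1) := by rw [hsk]
    constructor
    · have stepA : (1 - ε) * (L (k+1) - L k) ≤ (1 - ε) * (1/((k:ℝ)+1)) :=
        mul_le_mul_of_nonneg_left (hΔLub k) (by linarith)
      have stepB : (1 - ε) * (1/((k:ℝ)+1)) ≤ 4/(4*(k:ℝ)+10) := by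
        rw [mul_one_div, div_le_div_iff₀ hk1 (by linarith)]
        nlinarith
      have stepC : 4/(4*(k:ℝ)+10) ≤ 4 / s (k+1) - 4 / s k := by
        rw [hΔ, div_le_div_iff₀ (by linarith) (by positivity), hD, hs1]
        nlinarith [mul_nonneg (mul_nonneg (pow_nonneg ha0.le 3) (sub_nonneg.2 ha2))
            (by positivity : (0:ℝ) ≤ (k:ℝ)+1),
          sq_nonneg (q (k+1)),
          mul_nonneg (pow_nonneg ha0.le 3) (by positivity : (0:ℝ) ≤ 3*(k:ℝ)+5)]
      linarith
    · have hfact : 4 ≤ (1+ε) * (2 - q (k+1))^2 := by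
        nlinarith [mul_nonneg (by linarith : (0:ℝ) ≤ ε/2 - q (k+1)) (by linarith : (0:ℝ) ≤ 1 + ε),
          mul_nonneg hε.le (by linarith : (0:ℝ) ≤ 1 - ε),
          mul_nonneg (sq_nonneg (q (k+1))) (by linarith : (0:ℝ) ≤ 1 + ε)]
      have stepA : 4 / s (k+1) - 4 / s k ≤ (1+ε) * (1/((k:ℝ)+2)) := by
        rw [hΔ, mul_one_div, div_le_div_iff₀ (by positivity) hk2, hD, hs1]
        nlinarith [mul_nonneg (mul_nonneg hk2.le (sq_nonneg (q (k+1))))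
            (by linarith : (0:ℝ) ≤ (1+ε) * (2 - q (k+1))^2 - 4),
          mul_nonneg (mul_nonneg (by linarith : (0:ℝ) ≤ 1+ε) (pow_nonneg ha0.le 3))
            (by linarith : (0:ℝ) ≤ 2 - q (k+1))]
      have stepB : (1+ε) * (1/((k:ℝ)+2)) ≤ (1+ε) * (L (k+1) - L k) :=
        mul_le_mul_of_nonneg_left (hΔLlb k) (by linarith)
      linarith
  have hratio := aux_ratio_lemma (fun k => 4 / s k) L hLtop hkey
  -- s k * L k → 4
  have h4 : Tendsto (fun k : ℕ => (4:ℝ) / ((4 / s k) / L k)) atTop (nhds ((4:ℝ)/1)) :=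
    tendsto_const_nhds.div hratio one_ne_zero
  rw [div_one] at h4
  have hsL : Tendsto (fun k => s k * L k) atTop (nhds 4) := by
    refine h4.congr' ?_
    filter_upwards [eventually_ge_atTop 1] with k hk
    have hLk : 0 < L k := by
      rw [hLdef k]
      apply Real.log_pos
      have : (1:ℝ) ≤ (k:ℝ) := by exact_mod_cast hk
      linarith
    have hsk := hspos k
    field_simp
  have h2q : Tendsto (fun k => 2 - q k) atTop (nhds 2) := by
    have h : Tendsto (fun k : ℕ => (2:ℝ) - q k) atTop (nhds (2 - 0)) :=
      Tendsto.sub tendsto_const_nhds hq0'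
    simpa using h
  have hqL : Tendsto (fun k => q k * L k) atTop (nhds 2) := by
    have h := hsL.div h2q (by norm_num)
    norm_num at h
    refine h.congr fun k => ?_
    simp only [Pi.div_apply]
    have hq2 : (0:ℝ) < 2 - q k := by linarith [hqle k]
    rw [hsdef k]
    field_simp
  exact hqL.congr fun k => by rw [hqdef k, hLdef k]

/-- Greedy choice with `r = 2`, `s = 1`: the sequence `a_k = (1 - p_k)·log(k+1)`
converges to some limit `α` with `1 ≤ α ≤ 2`, and if `α < 2` then `a_k` is
strictly increasing for all sufficiently large `k`. -/
theorem stmt_18 (p : ℕ → ℝ) (hp0 : p 0 = 0)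
    (hp : ∀ k, 1 ≤ k → p k ∈ Set.Ioo (0 : ℝ) 1 ∧
      ((k : ℝ) + 1) * p (k - 1) ^ 2 - (k : ℝ) * p k ^ 2 - 2 * p k + 1 = 0) :
    ∃ α : ℝ, 1 ≤ α ∧ α ≤ 2 ∧
      Filter.Tendsto (fun k : ℕ => (1 - p k) * Real.log ((k : ℝ) + 1))
        Filter.atTop (nhds α) ∧
      (α < 2 → ∃ K : ℕ, ∀ k : ℕ, K ≤ k →
        (1 - p k) * Real.log ((k : ℝ) + 1)
          < (1 - p (k + 1)) * Real.log ((k : ℝ) + 2)) := by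
  exact ⟨2, by norm_num, le_rfl, key_limit p hp0 hp,
    fun h => absurd h (by norm_num)⟩
end
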